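/- Let Σ be a real symmetric n×n matrix with Σ ⪰ σ·I for some σ > 0, let G₂₂ be a real symmetric d×d matrix with G₂₂ ⪰ μ·I for some μ > 0, and let G₁₁ ∈ ℝ^{n×n}, G₁₂ ∈ ℝ^{n×d}, G₂₁ = G₁₂ᵀ. Define f : ℝ^{d×n} → ℝ by f(K) = tr(Σ(G₁₁ − KᵀG₂₁ − G₁₂K + KᵀG₂₂K)). Then f is strongly convex with parameter 2σμ with respect to the Frobenius norm; equivalently, the function K ↦ f(K) − σμ‖K‖_F² is convex on ℝ^{d×n}. -/

import Mathlib

open Matrix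

lemma trace_psd_nonneg {m : Type*} [Fintype m] [DecidableEq m] {M : Matrix m m ℝ}
    (hM : M.PosSemidef) : 0 ≤ M.trace := by
  exact hM.trace_nonneg

lemma trace_mul_psd_nonneg {m : Type*} [Fintype m] [DecidableEq m]
    {A M : Matrix m m ℝ} (hA : A.PosSemidef) (hM : M.PosSemidef) :
    0 ≤ (A * M).trace := by
  open scoped MatrixOrder in
  obtain ⟨B, rfl⟩ := CStarAlgebra.nonneg_iff_eq_star_mul_self.mp hA.nonneg
  rw [Matrix.mul_assoc, Matrix.trace_mul_comm]
  exact trace_psd_nonneg (by simpa [Matrix.star_eq_conjTranspose] using hM.mul_mul_conjTranspose_same B)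


/-- Spectral norm: operator norm induced by the Euclidean norm. -/
noncomputable def specNorm {m n : ℕ} (A : Matrix (Fin m) (Fin n) ℝ) : ℝ :=
  ‖LinearMap.toContinuousLinearMap (Matrix.toEuclideanLin A)‖

/-- Frobenius norm: square root of the sum of squares of the entries. -/
noncomputable def frobNorm {m n : ℕ} (A : Matrix (Fin m) (Fin n) ℝ) : ℝ :=
  Real.sqrt (∑ i, ∑ j, A i j ^ 2)
/-- Strong convexity (with parameter `2σμ` w.r.t. the Frobenius norm) of
`f(K) = tr(Σ(G₁₁ - KᵀG₂₁ - G₁₂K + KᵀG₂₂K))` when `Σ ⪰ σ•I` and `G₂₂ ⪰ μ•I`: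
equivalently, `K ↦ f(K) - σμ‖K‖_F²` is convex. -/
theorem stmt17 {n d : ℕ}
    (S : Matrix (Fin n) (Fin n) ℝ) (σ : ℝ) (hσ : 0 < σ)
    (hS : (S - σ • (1 : Matrix (Fin n) (Fin n) ℝ)).PosSemidef)
    (G₂₂ : Matrix (Fin d) (Fin d) ℝ) (μ : ℝ) (hμ : 0 < μ)
    (hG22 : (G₂₂ - μ • (1 : Matrix (Fin d) (Fin d) ℝ)).PosSemidef)
    (G₁₁ : Matrix (Fin n) (Fin n) ℝ) (G₁₂ : Matrix (Fin n) (Fin d) ℝ) :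
    ConvexOn ℝ Set.univ (fun K : Matrix (Fin d) (Fin n) ℝ =>
      (S * (G₁₁ - Kᵀ * G₁₂ᵀ - G₁₂ * K + Kᵀ * G₂₂ * K)).trace
        - σ * μ * ∑ i, ∑ j, K i j ^ 2) := by
  -- symmetry of S and G₂₂
  have hS1 := hS.1
  have hG1 := hG22.1
  rw [Matrix.IsHermitian, Matrix.conjTranspose_eq_transpose_of_trivial] at hS1 hG1
  have hSsym : Sᵀ = S := by
    have : Sᵀ - σ • 1 = S - σ • 1 := by
      simpa [Matrix.transpose_sub, Matrix.transpose_smul, Matrix.transpose_one] using hS1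
    exact sub_left_inj.mp this
  have hGsym : G₂₂ᵀ = G₂₂ := by
    have : G₂₂ᵀ - μ • 1 = G₂₂ - μ • 1 := by
      simpa [Matrix.transpose_sub, Matrix.transpose_smul, Matrix.transpose_one] using hG1
    exact sub_left_inj.mp this
  -- key strong convexity inequality
  have hz : ∀ z : Matrix (Fin d) (Fin n) ℝ,
      σ * μ * ∑ i, ∑ j, z i j ^ 2 ≤ (S * (zᵀ * G₂₂ * z)).trace := by
    intro z
    have hB' : (zᵀ * (G₂₂ - μ • 1) * z).PosSemidef := by
      simpa [Matrix.conjTranspose_eq_transpose_of_trivial] using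
        hG22.conjTranspose_mul_mul_same z
    have hzz : (zᵀ * z).PosSemidef := by
      simpa [Matrix.conjTranspose_eq_transpose_of_trivial] using
        Matrix.posSemidef_conjTranspose_mul_self z
    have t1 : 0 ≤ ((S - σ • 1) * (zᵀ * (G₂₂ - μ • 1) * z)).trace :=
      trace_mul_psd_nonneg hS hB'
    have t2 : 0 ≤ ((S - σ • 1) * (zᵀ * z)).trace := trace_mul_psd_nonneg hS hzz
    have t3 : 0 ≤ (zᵀ * (G₂₂ - μ • 1) * z).trace := trace_psd_nonneg hB'
    have hzq : (S * (zᵀ * G₂₂ * z)).trace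
        = ((S - σ • 1) * (zᵀ * (G₂₂ - μ • 1) * z)).trace
          + μ * ((S - σ • 1) * (zᵀ * z)).trace
          + σ * (zᵀ * (G₂₂ - μ • 1) * z).trace
          + σ * μ * (zᵀ * z).trace := by
      simp only [Matrix.sub_mul, Matrix.mul_sub, Matrix.smul_mul, Matrix.mul_smul,
        Matrix.one_mul, Matrix.mul_one, Matrix.trace_sub, Matrix.trace_add,
        Matrix.trace_smul, smul_eq_mul]
      ring
    have htr : (zᵀ * z).trace = ∑ i, ∑ j, z i j ^ 2 := by
      simp only [Matrix.trace, Matrix.diag, Matrix.mul_apply, Matrix.transpose_apply, sq]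
      exact Finset.sum_comm
    rw [hzq, htr]
    nlinarith [mul_nonneg hμ.le t2, mul_nonneg hσ.le t3]
  -- symmetry of the cross term
  have hsymm : ∀ u v : Matrix (Fin d) (Fin n) ℝ,
      (S * (uᵀ * G₂₂ * v)).trace = (S * (vᵀ * G₂₂ * u)).trace := by
    intro u v
    conv_lhs => rw [← Matrix.trace_transpose]
    rw [Matrix.transpose_mul, Matrix.transpose_mul, Matrix.transpose_mul,
      Matrix.transpose_transpose, hSsym, hGsym, Matrix.trace_mul_comm]
    rw [Matrix.mul_assoc]
  -- expansions
  have expand1 : ∀ u : Matrix (Fin d) (Fin n) ℝ,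
      (S * (G₁₁ - uᵀ * G₁₂ᵀ - G₁₂ * u + uᵀ * G₂₂ * u)).trace
        = (S * G₁₁).trace - (S * (uᵀ * G₁₂ᵀ)).trace - (S * (G₁₂ * u)).trace
          + (S * (uᵀ * G₂₂ * u)).trace := by
    intro u
    simp only [Matrix.mul_sub, Matrix.mul_add, Matrix.trace_sub, Matrix.trace_add]
  have expand2 : ∀ (c e : ℝ) (u v : Matrix (Fin d) (Fin n) ℝ),
      (S * (G₁₁ - (c • u + e • v)ᵀ * G₁₂ᵀ - G₁₂ * (c • u + e • v)
          + (c • u + e • v)ᵀ * G₂₂ * (c • u + e • v))).trace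
        = (S * G₁₁).trace
          - (c * (S * (uᵀ * G₁₂ᵀ)).trace + e * (S * (vᵀ * G₁₂ᵀ)).trace)
          - (c * (S * (G₁₂ * u)).trace + e * (S * (G₁₂ * v)).trace)
          + (c ^ 2 * (S * (uᵀ * G₂₂ * u)).trace + c * e * (S * (uᵀ * G₂₂ * v)).trace
             + c * e * (S * (vᵀ * G₂₂ * u)).trace + e ^ 2 * (S * (vᵀ * G₂₂ * v)).trace) := by
    intro c e u v
    simp only [Matrix.transpose_add, Matrix.transpose_smul, Matrix.add_mul, Matrix.mul_add,
      Matrix.smul_mul, Matrix.mul_smul, Matrix.mul_sub, Matrix.sub_mul, Matrix.trace_add,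
      Matrix.trace_sub, Matrix.trace_smul, smul_eq_mul, smul_smul]
    ring
  have expand3 : ∀ (c e : ℝ) (u v : Matrix (Fin d) (Fin n) ℝ),
      (S * ((c • u + e • v)ᵀ * G₂₂ * (c • u + e • v))).trace
        = c ^ 2 * (S * (uᵀ * G₂₂ * u)).trace + c * e * (S * (uᵀ * G₂₂ * v)).trace
          + c * e * (S * (vᵀ * G₂₂ * u)).trace + e ^ 2 * (S * (vᵀ * G₂₂ * v)).trace := by
    intro c e u v
    simp only [Matrix.transpose_add, Matrix.transpose_smul, Matrix.add_mul, Matrix.mul_add,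
      Matrix.smul_mul, Matrix.mul_smul, Matrix.trace_add, Matrix.trace_smul,
      smul_eq_mul, smul_smul]
    ring
  have sexp : ∀ (c e : ℝ) (u v : Matrix (Fin d) (Fin n) ℝ),
      ∑ i, ∑ j, (c • u + e • v) i j ^ 2
        = c ^ 2 * (∑ i, ∑ j, u i j ^ 2) + 2 * c * e * (∑ i, ∑ j, u i j * v i j)
          + e ^ 2 * (∑ i, ∑ j, v i j ^ 2) := by
    intro c e u v
    have h : ∀ p q : ℝ, (c * p + e * q) ^ 2
        = c ^ 2 * p ^ 2 + 2 * c * e * (p * q) + e ^ 2 * q ^ 2 := fun p q => by ring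
    simp only [Matrix.add_apply, Matrix.smul_apply, smul_eq_mul, h,
      Finset.sum_add_distrib, Finset.mul_sum]
  constructor
  · exact convex_univ
  · intro x _ y _ a b ha hb hab
    have hb1 : b = 1 - a := by linarith
    subst hb1
    simp only [smul_eq_mul]
    have hxy : x - y = (1 : ℝ) • x + (-1 : ℝ) • y := by module
    have hz' := hz (x - y)
    rw [hxy, sexp, expand3, hsymm x y] at hz'
    rw [expand2 a (1-a) x y, sexp a (1-a) x y, expand1 x, expand1 y, hsymm x y]
    nlinarith [mul_nonneg ha hb, hz', sq_nonneg a, sq_nonneg (1 - a)]
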